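/- For $v \in \mathbb{R}^Z$, the piecewise linear prolongation $I_h^{\mathrm{ply}} v$ with respect to the midpoint grid and the piecewise constant prolongation $I_h^{\mathrm{pcy}} v$ satisfy the two-sided $L^2$ comparison $\|I_h^{\mathrm{ply}} v\|_{L^2} \leq \|I_h^{\mathrm{pcy}} v\|_{L^2} \leq 3\,\|I_h^{\mathrm{ply}} v\|_{L^2}$, and moreover $\int_0^1 I_h^{\mathrm{ply}} v\,dx = \int_0^1 I_h^{\mathrm{pcy}} v\,dx$. -/

import Mathlib

open MeasureTheory Set intervalIntegral

private lemma ae_uIoc_of_Ico {a b : ℝ} (hab : a ≤ b) {f g : ℝ → ℝ}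
    (hfg : ∀ x ∈ Set.Ico a b, f x = g x) :
    ∀ᵐ x : ℝ, x ∈ Set.uIoc a b → f x = g x := by
  have hb : ∀ᵐ x : ℝ, x ≠ b := by
    rw [MeasureTheory.ae_iff]
    simp [Set.setOf_eq_eq_singleton]
  filter_upwards [hb] with x hx hmem
  rw [Set.uIoc_of_le hab] at hmem
  exact hfg x ⟨hmem.1.le, lt_of_le_of_ne hmem.2 hx⟩

private lemma integral_congr_Ico {a b : ℝ} (hab : a ≤ b) {f g : ℝ → ℝ}
    (hfg : ∀ x ∈ Set.Ico a b, f x = g x) :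
    ∫ x in a..b, f x = ∫ x in a..b, g x :=
  intervalIntegral.integral_congr_ae (ae_uIoc_of_Ico hab hfg)

private lemma intervalIntegrable_of_Ico {a b : ℝ} (hab : a ≤ b) {f g : ℝ → ℝ}
    (hg : IntervalIntegrable g volume a b)
    (hfg : ∀ x ∈ Set.Ico a b, g x = f x) :
    IntervalIntegrable f volume a b :=
  hg.congr_ae ((MeasureTheory.ae_restrict_iff' measurableSet_uIoc).2 (ae_uIoc_of_Ico hab hfg))

private lemma integ_lin (A B s t u : ℝ) :
    (∫ x in t..u, (A + B * (x - s))) =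
      A * (u - t) + B / 2 * ((u - s) ^ 2 - (t - s) ^ 2) := by
  have hder : ∀ x ∈ Set.uIcc t u,
      HasDerivAt (fun y => A * y + B / 2 * (y - s) ^ 2) (A + B * (x - s)) x := by
    intro x _
    have h1 : HasDerivAt (fun y : ℝ => A * y) (A * 1) x := (hasDerivAt_id x).const_mul A
    have h2 : HasDerivAt (fun y : ℝ => B / 2 * (y - s) ^ 2)
        (B / 2 * ((2 : ℕ) * (x - s) ^ 1 * 1)) x :=
      (((hasDerivAt_id x).sub_const s).pow 2).const_mul (B / 2)
    exact (h1.add h2).congr_deriv (by push_cast; ring)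
  rw [intervalIntegral.integral_eq_sub_of_hasDerivAt hder
    (Continuous.intervalIntegrable (by fun_prop) _ _)]
  ring

private lemma integ_sq (A B s t u : ℝ) :
    (∫ x in t..u, (A + B * (x - s)) ^ 2) =
      A ^ 2 * (u - t) + A * B * ((u - s) ^ 2 - (t - s) ^ 2)
        + B ^ 2 / 3 * ((u - s) ^ 3 - (t - s) ^ 3) := by
  have hder : ∀ x ∈ Set.uIcc t u,
      HasDerivAt (fun y => A ^ 2 * y + A * B * (y - s) ^ 2 + B ^ 2 / 3 * (y - s) ^ 3)
        ((A + B * (x - s)) ^ 2) x := by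
    intro x _
    have h1 : HasDerivAt (fun y : ℝ => A ^ 2 * y) (A ^ 2 * 1) x :=
      (hasDerivAt_id x).const_mul (A ^ 2)
    have h2 : HasDerivAt (fun y : ℝ => A * B * (y - s) ^ 2)
        (A * B * ((2 : ℕ) * (x - s) ^ 1 * 1)) x :=
      (((hasDerivAt_id x).sub_const s).pow 2).const_mul (A * B)
    have h3 : HasDerivAt (fun y : ℝ => B ^ 2 / 3 * (y - s) ^ 3)
        (B ^ 2 / 3 * ((3 : ℕ) * (x - s) ^ 2 * 1)) x :=
      (((hasDerivAt_id x).sub_const s).pow 3).const_mul (B ^ 2 / 3)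
    exact ((h1.add h2).add h3).congr_deriv (by push_cast; ring)
  rw [intervalIntegral.integral_eq_sub_of_hasDerivAt hder
    (Continuous.intervalIntegrable (by fun_prop) _ _)]
  ring
set_option maxHeartbeats 1000000 in
theorem stmt_12 (Z : ℕ) (hZ : 2 ≤ Z) (h : ℝ) (hh : h = 1 / (Z : ℝ)) (v : ℕ → ℝ)
    (w : ℝ → ℝ)
    (hw0 : ∀ x ∈ Set.Ico (0:ℝ) (h / 2), w x = v 0)
    (hwZ : ∀ x ∈ Set.Icc ((Z : ℝ) * h - h / 2) 1, w x = v (Z - 1))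
    (hwi : ∀ i : ℕ, 1 ≤ i → i ≤ Z - 1 →
      ∀ x ∈ Set.Ico ((i : ℝ) * h - h / 2) ((i : ℝ) * h + h / 2),
        w x = v (i - 1) + (v i - v (i - 1)) / h * (x - ((i : ℝ) * h - h / 2))) :
    let pcy : ℝ → ℝ := fun x => ∑ i ∈ Finset.range Z,
      Set.indicator (Set.Ico ((i : ℝ) * h) (((i : ℝ) + 1) * h)) (fun _ => v i) x
    Real.sqrt (∫ x in (0:ℝ)..1, (w x) ^ 2) ≤ Real.sqrt (∫ x in (0:ℝ)..1, (pcy x) ^ 2) ∧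
    Real.sqrt (∫ x in (0:ℝ)..1, (pcy x) ^ 2) ≤ 3 * Real.sqrt (∫ x in (0:ℝ)..1, (w x) ^ 2) ∧
    (∫ x in (0:ℝ)..1, w x) = ∫ x in (0:ℝ)..1, pcy x := by
  intro pcy
  have hZ0 : (0:ℝ) < (Z:ℝ) := by exact_mod_cast Nat.lt_of_lt_of_le (by norm_num) hZ
  have hhpos : 0 < h := by rw [hh]; positivity
  have hZh : (Z:ℝ) * h = 1 := by rw [hh]; field_simp
  set N := Z - 1 with hN
  have hZN : Z = N + 1 := by omega
  -- pcy evaluation on each cell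
  have hpcy_eval : ∀ i, i < Z → ∀ x ∈ Set.Ico ((i:ℝ)*h) (((i:ℝ)+1)*h), pcy x = v i := by
    intro i hi x hx
    simp only [pcy]
    rw [Finset.sum_eq_single i]
    · exact Set.indicator_of_mem hx _
    · intro j hj hji
      apply Set.indicator_of_notMem
      intro hxj
      rcases lt_or_gt_of_ne hji with hlt | hlt
      · have hc : ((j:ℝ)+1) * h ≤ (i:ℝ) * h := by
          have hji' : ((j:ℝ)+1) ≤ (i:ℝ) := by exact_mod_cast hlt
          nlinarith
        linarith [hx.1, hxj.2]
      · have hc : ((i:ℝ)+1) * h ≤ (j:ℝ) * h := by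
          have hji' : ((i:ℝ)+1) ≤ (j:ℝ) := by exact_mod_cast hlt
          nlinarith
        linarith [hx.2, hxj.1]
    · intro hni; exact absurd (Finset.mem_range.2 hi) hni
  have hkle : ∀ k : ℕ, ((k:ℝ))*h ≤ ((k:ℝ)+1)*h := fun k => by nlinarith [hhpos.le]
  -- pcy integrals
  have hintc : ∀ k, k < Z → IntervalIntegrable pcy volume ((k:ℝ)*h) (((k:ℝ)+1)*h) :=
    fun k hk => intervalIntegrable_of_Ico (hkle k) (g := fun _ => v k)
      intervalIntegrable_const (fun x hx => (hpcy_eval k hk x hx).symm)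
  have hintc2 : ∀ k, k < Z →
      IntervalIntegrable (fun x => (pcy x)^2) volume ((k:ℝ)*h) (((k:ℝ)+1)*h) :=
    fun k hk => intervalIntegrable_of_Ico (hkle k) (g := fun _ => (v k)^2)
      intervalIntegrable_const (fun x hx => by rw [hpcy_eval k hk x hx])
  have hval1 : ∀ k, k < Z → (∫ x in ((k:ℝ)*h)..(((k+1:ℕ):ℝ)*h), pcy x) = h * v k := by
    intro k hk
    push_cast
    rw [integral_congr_Ico (hkle k) (g := fun _ => v k) (hpcy_eval k hk),
      intervalIntegral.integral_const, smul_eq_mul]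
    ring
  have hval2 : ∀ k, k < Z →
      (∫ x in ((k:ℝ)*h)..(((k+1:ℕ):ℝ)*h), (pcy x)^2) = h * (v k)^2 := by
    intro k hk
    push_cast
    rw [integral_congr_Ico (hkle k) (g := fun _ => (v k)^2)
      (fun x hx => by rw [hpcy_eval k hk x hx]),
      intervalIntegral.integral_const, smul_eq_mul]
    ring
  have Hpcy1 : (∫ x in (0:ℝ)..1, pcy x) = h * ∑ i ∈ Finset.range Z, v i := by
    have hsum := intervalIntegral.sum_integral_adjacent_intervals (μ := volume)
      (a := fun k : ℕ => (k:ℝ)*h) (f := pcy) (n := Z)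
      (fun k hk => by push_cast; exact hintc k hk)
    simp only [Nat.cast_zero, zero_mul] at hsum
    rw [hZh] at hsum
    rw [← hsum, Finset.mul_sum]
    exact Finset.sum_congr rfl fun k hk => hval1 k (Finset.mem_range.1 hk)
  have Hpcy2 : (∫ x in (0:ℝ)..1, (pcy x)^2) = h * ∑ i ∈ Finset.range Z, (v i)^2 := by
    have hsum := intervalIntegral.sum_integral_adjacent_intervals (μ := volume)
      (a := fun k : ℕ => (k:ℝ)*h) (f := fun x => (pcy x)^2) (n := Z)
      (fun k hk => by push_cast; exact hintc2 k hk)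
    simp only [Nat.cast_zero, zero_mul] at hsum
    rw [hZh] at hsum
    rw [← hsum, Finset.mul_sum]
    exact Finset.sum_congr rfl fun k hk => hval2 k (Finset.mem_range.1 hk)
  -- w on the interior cells
  have hwmid_eq : ∀ k, k < N → ∀ x ∈ Set.Ico (((k:ℝ)+1/2)*h) (((k:ℝ)+1+1/2)*h),
      w x = v k + (v (k+1) - v k)/h * (x - ((k:ℝ)+1/2)*h) := by
    intro k hk x hx
    have hx' : x ∈ Set.Ico (((k+1:ℕ):ℝ)*h - h/2) (((k+1:ℕ):ℝ)*h + h/2) := by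
      push_cast
      constructor
      · nlinarith [hx.1]
      · nlinarith [hx.2]
    have hw := hwi (k+1) (by omega) (by omega) x hx'
    rw [hw]
    simp only [Nat.add_sub_cancel]
    push_cast
    ring
  have hmidle : ∀ k : ℕ, ((k:ℝ)+1/2)*h ≤ ((k:ℝ)+1+1/2)*h := fun k => by nlinarith [hhpos.le]
  have hintw : ∀ k, k < N →
      IntervalIntegrable w volume (((k:ℝ)+1/2)*h) (((k:ℝ)+1+1/2)*h) :=
    fun k hk => intervalIntegrable_of_Ico (hmidle k)
      (g := fun x => v k + (v (k+1) - v k)/h * (x - ((k:ℝ)+1/2)*h))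
      (Continuous.intervalIntegrable (by fun_prop) _ _)
      (fun x hx => (hwmid_eq k hk x hx).symm)
  have hintw2 : ∀ k, k < N →
      IntervalIntegrable (fun x => (w x)^2) volume (((k:ℝ)+1/2)*h) (((k:ℝ)+1+1/2)*h) :=
    fun k hk => intervalIntegrable_of_Ico (hmidle k)
      (g := fun x => (v k + (v (k+1) - v k)/h * (x - ((k:ℝ)+1/2)*h))^2)
      (Continuous.intervalIntegrable (by fun_prop) _ _)
      (fun x hx => by rw [hwmid_eq k hk x hx])
  have hvalw1 : ∀ k, k < N →
      (∫ x in (((k:ℝ)+1/2)*h)..((((k+1:ℕ):ℝ)+1/2)*h), w x) = h * (v k + v (k+1))/2 := by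
    intro k hk
    push_cast
    rw [integral_congr_Ico (hmidle k)
      (g := fun x => v k + (v (k+1) - v k)/h * (x - ((k:ℝ)+1/2)*h)) (hwmid_eq k hk),
      integ_lin]
    field_simp
    ring
  have hvalw2 : ∀ k, k < N →
      (∫ x in (((k:ℝ)+1/2)*h)..((((k+1:ℕ):ℝ)+1/2)*h), (w x)^2)
        = h * ((v k)^2 + v k * v (k+1) + (v (k+1))^2)/3 := by
    intro k hk
    push_cast
    rw [integral_congr_Ico (hmidle k)
      (g := fun x => (v k + (v (k+1) - v k)/h * (x - ((k:ℝ)+1/2)*h))^2)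
      (fun x hx => by rw [hwmid_eq k hk x hx]),
      integ_sq]
    field_simp
    ring
  have e0 : (((0:ℕ):ℝ)+1/2)*h = h / 2 := by push_cast; ring
  have eN : (((N:ℕ):ℝ)+1/2)*h = 1 - h/2 := by
    have hNc : ((N:ℕ):ℝ) = (Z:ℝ) - 1 := by rw [hZN]; push_cast; ring
    have e : (((Z:ℝ)-1)+1/2)*h = (Z:ℝ)*h - h/2 := by ring
    rw [hNc, e, hZh]
  -- endpoint integrals for w
  have hle1 : (0:ℝ) ≤ h/2 := by linarith
  have hle2 : (1:ℝ) - h/2 ≤ 1 := by linarith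
  have hwZ' : ∀ x ∈ Set.Ico (1 - h/2) (1:ℝ), w x = v N := by
    intro x hx
    exact hwZ x ⟨by rw [hZh]; exact hx.1, hx.2.le⟩
  have hwA : (∫ x in (0:ℝ)..(h/2), w x) = h/2 * v 0 := by
    rw [integral_congr_Ico hle1 (g := fun _ => v 0) hw0,
      intervalIntegral.integral_const, smul_eq_mul]
    ring
  have hwA2 : (∫ x in (0:ℝ)..(h/2), (w x)^2) = h/2 * (v 0)^2 := by
    rw [integral_congr_Ico hle1 (g := fun _ => (v 0)^2) (fun x hx => by rw [hw0 x hx]),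
      intervalIntegral.integral_const, smul_eq_mul]
    ring
  have hwC : (∫ x in (1 - h/2)..1, w x) = h/2 * v N := by
    rw [integral_congr_Ico hle2 (g := fun _ => v N) hwZ',
      intervalIntegral.integral_const, smul_eq_mul]
    ring
  have hwC2 : (∫ x in (1 - h/2)..1, (w x)^2) = h/2 * (v N)^2 := by
    rw [integral_congr_Ico hle2 (g := fun _ => (v N)^2) (fun x hx => by rw [hwZ' x hx]),
      intervalIntegral.integral_const, smul_eq_mul]
    ring
  -- middle integrals for w
  have hmid1 : (∫ x in (h/2)..(1 - h/2), w x)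
      = ∑ k ∈ Finset.range N, h * (v k + v (k+1))/2 := by
    have hsum := intervalIntegral.sum_integral_adjacent_intervals (μ := volume)
      (a := fun k : ℕ => ((k:ℝ)+1/2)*h) (f := w) (n := N) (fun k hk => by push_cast; exact hintw k hk)
    beta_reduce at hsum
    rw [← eN, ← e0, ← hsum]
    exact Finset.sum_congr rfl fun k hk => hvalw1 k (Finset.mem_range.1 hk)
  have hmid2 : (∫ x in (h/2)..(1 - h/2), (w x)^2)
      = ∑ k ∈ Finset.range N, h * ((v k)^2 + v k * v (k+1) + (v (k+1))^2)/3 := by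
    have hsum := intervalIntegral.sum_integral_adjacent_intervals (μ := volume)
      (a := fun k : ℕ => ((k:ℝ)+1/2)*h) (f := fun x => (w x)^2) (n := N)
      (fun k hk => by push_cast; exact hintw2 k hk)
    beta_reduce at hsum
    rw [← eN, ← e0, ← hsum]
    exact Finset.sum_congr rfl fun k hk => hvalw2 k (Finset.mem_range.1 hk)
  -- integrability of w on the three blocks
  have iA : IntervalIntegrable w volume 0 (h/2) :=
    intervalIntegrable_of_Ico hle1 (g := fun _ => v 0) intervalIntegrable_const
      (fun x hx => (hw0 x hx).symm)
  have iA2 : IntervalIntegrable (fun x => (w x)^2) volume 0 (h/2) :=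
    intervalIntegrable_of_Ico hle1 (g := fun _ => (v 0)^2) intervalIntegrable_const
      (fun x hx => by rw [hw0 x hx])
  have iC : IntervalIntegrable w volume (1 - h/2) 1 :=
    intervalIntegrable_of_Ico hle2 (g := fun _ => v N) intervalIntegrable_const
      (fun x hx => (hwZ' x hx).symm)
  have iC2 : IntervalIntegrable (fun x => (w x)^2) volume (1 - h/2) 1 :=
    intervalIntegrable_of_Ico hle2 (g := fun _ => (v N)^2) intervalIntegrable_const
      (fun x hx => by rw [hwZ' x hx])
  have iB : IntervalIntegrable w volume (h/2) (1 - h/2) := by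
    rw [← eN, ← e0]
    exact IntervalIntegrable.trans_iterate (a := fun k : ℕ => ((k:ℝ)+1/2)*h) (fun k hk => by push_cast; exact hintw k hk)
  have iB2 : IntervalIntegrable (fun x => (w x)^2) volume (h/2) (1 - h/2) := by
    rw [← eN, ← e0]
    exact IntervalIntegrable.trans_iterate (a := fun k : ℕ => ((k:ℝ)+1/2)*h) (fun k hk => by push_cast; exact hintw2 k hk)
  have hsplit1 : (∫ x in (0:ℝ)..1, w x)
      = (∫ x in (0:ℝ)..(h/2), w x) + ((∫ x in (h/2)..(1 - h/2), w x)
        + ∫ x in (1 - h/2)..1, w x) := by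
    rw [intervalIntegral.integral_add_adjacent_intervals iB iC,
      intervalIntegral.integral_add_adjacent_intervals iA (iB.trans iC)]
  have hsplit2 : (∫ x in (0:ℝ)..1, (w x)^2)
      = (∫ x in (0:ℝ)..(h/2), (w x)^2) + ((∫ x in (h/2)..(1 - h/2), (w x)^2)
        + ∫ x in (1 - h/2)..1, (w x)^2) := by
    rw [intervalIntegral.integral_add_adjacent_intervals iB2 iC2,
      intervalIntegral.integral_add_adjacent_intervals iA2 (iB2.trans iC2)]
  have Hw1 : (∫ x in (0:ℝ)..1, w x)
      = h/2 * v 0 + (∑ k ∈ Finset.range N, h * (v k + v (k+1))/2) + h/2 * v N := by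
    rw [hsplit1, hwA, hmid1, hwC]; ring
  have Hw2 : (∫ x in (0:ℝ)..1, (w x)^2)
      = h/2 * (v 0)^2 + (∑ k ∈ Finset.range N, h * ((v k)^2 + v k * v (k+1) + (v (k+1))^2)/3)
        + h/2 * (v N)^2 := by
    rw [hsplit2, hwA2, hmid2, hwC2]; ring
  -- sum manipulations
  have A1 : ∑ k ∈ Finset.range N, v k = (∑ i ∈ Finset.range Z, v i) - v N := by
    rw [hZN, Finset.sum_range_succ]; ring
  have A2 : ∑ k ∈ Finset.range N, v (k+1) = (∑ i ∈ Finset.range Z, v i) - v 0 := by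
    rw [hZN, Finset.sum_range_succ']; ring
  have A1s : ∑ k ∈ Finset.range N, (v k)^2 = (∑ i ∈ Finset.range Z, (v i)^2) - (v N)^2 := by
    rw [hZN, Finset.sum_range_succ]; ring
  have A2s : ∑ k ∈ Finset.range N, (v (k+1))^2
      = (∑ i ∈ Finset.range Z, (v i)^2) - (v 0)^2 := by
    rw [hZN, Finset.sum_range_succ']; ring
  have B1 : (∑ k ∈ Finset.range N, h * (v k + v (k+1))/2)
      = h/2 * (∑ k ∈ Finset.range N, v k) + h/2 * (∑ k ∈ Finset.range N, v (k+1)) := by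
    rw [Finset.mul_sum, Finset.mul_sum, ← Finset.sum_add_distrib]
    exact Finset.sum_congr rfl fun k _ => by ring
  have B2 : (∑ k ∈ Finset.range N, h * ((v k)^2 + (v (k+1))^2)/2)
      = h/2 * (∑ k ∈ Finset.range N, (v k)^2)
        + h/2 * (∑ k ∈ Finset.range N, (v (k+1))^2) := by
    rw [Finset.mul_sum, Finset.mul_sum, ← Finset.sum_add_distrib]
    exact Finset.sum_congr rfl fun k _ => by ring
  have hS2split : h * (∑ i ∈ Finset.range Z, (v i)^2)
      = h/2 * (v 0)^2 + (∑ k ∈ Finset.range N, h * ((v k)^2 + (v (k+1))^2)/2)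
        + h/2 * (v N)^2 := by
    rw [B2, A1s, A2s]; ring
  have hLM : (∑ k ∈ Finset.range N, h * ((v k)^2 + v k * v (k+1) + (v (k+1))^2)/3)
      ≤ ∑ k ∈ Finset.range N, h * ((v k)^2 + (v (k+1))^2)/2 :=
    Finset.sum_le_sum fun k _ => by
      nlinarith [mul_nonneg hhpos.le (sq_nonneg (v k - v (k+1)))]
  have hML : (∑ k ∈ Finset.range N, h * ((v k)^2 + (v (k+1))^2)/2)
      ≤ 9 * ∑ k ∈ Finset.range N, h * ((v k)^2 + v k * v (k+1) + (v (k+1))^2)/3 := by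
    rw [Finset.mul_sum]
    exact Finset.sum_le_sum fun k _ => by
      nlinarith [mul_nonneg hhpos.le (sq_nonneg (v k + v (k+1))),
        mul_nonneg hhpos.le (sq_nonneg (v k)), mul_nonneg hhpos.le (sq_nonneg (v (k+1)))]
  refine ⟨?_, ?_, ?_⟩
  · apply Real.sqrt_le_sqrt
    rw [Hw2, Hpcy2, hS2split]
    linarith [hLM]
  · have h9 : (∫ x in (0:ℝ)..1, (pcy x)^2) ≤ 9 * ∫ x in (0:ℝ)..1, (w x)^2 := by
      rw [Hw2, Hpcy2, hS2split]
      have p0 : (0:ℝ) ≤ h/2 * (v 0)^2 := by positivity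
      have pN : (0:ℝ) ≤ h/2 * (v N)^2 := by positivity
      linarith [hML]
    calc Real.sqrt (∫ x in (0:ℝ)..1, (pcy x)^2)
        ≤ Real.sqrt (9 * ∫ x in (0:ℝ)..1, (w x)^2) := Real.sqrt_le_sqrt h9
      _ = 3 * Real.sqrt (∫ x in (0:ℝ)..1, (w x)^2) := by
          rw [show (9:ℝ) = 3^2 by norm_num, Real.sqrt_mul (by positivity),
            Real.sqrt_sq (by norm_num)]
  · rw [Hw1, Hpcy1, B1, A1, A2]; ring
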